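/- For every invertible matrix Ψ ∈ ℝ^{L×L}, the system (D, HΨ) is s-sparse-controllable if and only if the system (D, H) is s-sparse-controllable; that is, controllability using inputs that are s-sparse under the basis Ψ is equivalent to controllability using inputs that are s-sparse under the canonical basis. -/

import Mathlib

open Matrix

/-- `h` is `s`-sparse: at most `s` nonzero entries. -/
def IsSparse {L : ℕ} (s : ℕ) (h : Fin L → ℝ) : Prop :=
  {i : Fin L | h i ≠ 0}.ncard ≤ s

/-- Inputs `h 0, …, h (K-1)` steer the state `xinit` to `xfinal`:
`xfinal − D^K xinit = ∑_{k=1}^{K} D^{K−k} H h_k`. -/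
def Steers {N L : ℕ} (D : Matrix (Fin N) (Fin N) ℝ) (H : Matrix (Fin N) (Fin L) ℝ)
    (K : ℕ) (h : Fin K → Fin L → ℝ) (xinit xfinal : Fin N → ℝ) : Prop :=
  xfinal - (D ^ K) *ᵥ xinit = ∑ k : Fin K, (D ^ (K - 1 - (k : ℕ))) *ᵥ (H *ᵥ h k)

/-- The system `(D, H)` is `s`-sparse-controllable. -/
def SparseControllable (N L s : ℕ) (D : Matrix (Fin N) (Fin N) ℝ)
    (H : Matrix (Fin N) (Fin L) ℝ) : Prop :=
  ∀ xinit xfinal : Fin N → ℝ, ∃ K : ℕ, 0 < K ∧ ∃ h : Fin K → Fin L → ℝ,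
    (∀ k, IsSparse s (h k)) ∧ Steers D H K h xinit xfinal

namespace SparseAux

open Set Submodule

variable {N L : ℕ}

/-- Span of the columns of `M` indexed by `S`. -/
def cs (M : Matrix (Fin N) (Fin L) ℝ) (S : Finset (Fin L)) : Submodule ℝ (Fin N → ℝ) :=
  Submodule.span ℝ (M.transpose '' ↑S)

lemma mulVec_eq_sum' (M : Matrix (Fin N) (Fin L) ℝ) (h : Fin L → ℝ) :
    M *ᵥ h = ∑ j : Fin L, h j • M.transpose j := by
  ext i
  simp [Matrix.mulVec, dotProduct, Finset.sum_apply, mul_comm]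

lemma mulVec_mem_cs (M : Matrix (Fin N) (Fin L) ℝ) (S : Finset (Fin L)) (h : Fin L → ℝ)
    (hsupp : ∀ j, j ∉ S → h j = 0) : M *ᵥ h ∈ cs M S := by
  rw [mulVec_eq_sum']
  rw [← Finset.sum_subset (Finset.subset_univ S) (by intro j _ hj; rw [hsupp j hj, zero_smul])]
  exact Submodule.sum_mem _ fun j hj =>
    Submodule.smul_mem _ _ (Submodule.subset_span ⟨j, by simpa using hj, rfl⟩)

lemma mem_cs_exists (M : Matrix (Fin N) (Fin L) ℝ) (S : Finset (Fin L)) (w : Fin N → ℝ)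
    (hw : w ∈ cs M S) : ∃ h : Fin L → ℝ, (∀ j, j ∉ S → h j = 0) ∧ M *ᵥ h = w := by
  rw [cs] at hw
  erw [Finsupp.mem_span_image_iff_linearCombination] at hw
  obtain ⟨l, hl, hlw⟩ := hw
  refine ⟨l, fun j hj => ?_, ?_⟩
  · by_contra h0
    exact hj (hl (Finsupp.mem_support_iff.mpr h0))
  · erw [mulVec_eq_sum', ← hlw, Finsupp.linearCombination_apply,
      Finsupp.sum_fintype _ _ (fun j => zero_smul ℝ (Mᵀ j))]

/-- The pattern condition characterizing sparse controllability. -/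
def Cond (N L s : ℕ) (D : Matrix (Fin N) (Fin N) ℝ) (B : Matrix (Fin N) (Fin L) ℝ) : Prop :=
  ∃ K : ℕ, 0 < K ∧ ∃ S : Fin K → Finset (Fin L), (∀ k, (S k).card ≤ s) ∧
    (⨆ k : Fin K, Submodule.map ((D ^ (K - 1 - (k : ℕ))).mulVecLin) (cs B (S k))) = ⊤

lemma cond_to_sc {s : ℕ} {D : Matrix (Fin N) (Fin N) ℝ} {B : Matrix (Fin N) (Fin L) ℝ}
    (hC : Cond N L s D B) : SparseControllable N L s D B := by
  obtain ⟨K, hK, S, hcard, htop⟩ := hC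
  intro xinit xfinal
  refine ⟨K, hK, ?_⟩
  set y := xfinal - (D ^ K) *ᵥ xinit with hy
  have hmem : y ∈ (⨆ k : Fin K, Submodule.map ((D ^ (K - 1 - (k : ℕ))).mulVecLin)
      (cs B (S k))) := htop ▸ Submodule.mem_top
  rw [Submodule.mem_iSup_iff_exists_finsupp] at hmem
  obtain ⟨f, hf, hfsum⟩ := hmem
  have hex : ∀ k : Fin K, ∃ hk : Fin L → ℝ, (∀ j, j ∉ S k → hk j = 0) ∧
      (D ^ (K - 1 - (k : ℕ))) *ᵥ (B *ᵥ hk) = f k := by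
    intro k
    obtain ⟨w, hw, hweq⟩ := hf k
    obtain ⟨hk, hsupp, hkw⟩ := mem_cs_exists B (S k) w hw
    exact ⟨hk, hsupp, by rw [hkw]; simpa using hweq⟩
  choose h hsupp heq using hex
  refine ⟨h, fun k => ?_, ?_⟩
  · have hsub : {i : Fin L | h k i ≠ 0} ⊆ ↑(S k) := by
      intro i hi
      by_contra hiS
      exact hi (hsupp k i (by simpa using hiS))
    calc {i : Fin L | h k i ≠ 0}.ncard ≤ (↑(S k) : Set (Fin L)).ncard :=
          Set.ncard_le_ncard hsub (Set.toFinite _)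
      _ = (S k).card := Set.ncard_coe_finset _
      _ ≤ s := hcard k
  · show y = _
    rw [← hfsum, Finsupp.sum_fintype _ _ (fun k => rfl)]
    exact Finset.sum_congr rfl fun k _ => (heq k).symm



open MeasureTheory in

lemma sc_to_cond {s : ℕ} (hN : 0 < N) {D : Matrix (Fin N) (Fin N) ℝ}
    {B : Matrix (Fin N) (Fin L) ℝ} (hSC : SparseControllable N L s D B) :
    Cond N L s D B := by
  classical
  by_contra hC
  haveI : NeZero N := ⟨hN.ne'⟩
  -- the countable family of candidate subspaces
  set V : (K : ℕ) × (Fin K → Finset (Fin L)) → Submodule ℝ (Fin N → ℝ) := fun p =>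
    ⨆ k : Fin p.1, Submodule.map ((D ^ (p.1 - 1 - (k : ℕ))).mulVecLin)
      (cs B (if (p.2 k).card ≤ s then p.2 k else ∅)) with hV
  have hne : ∀ i, V i ≠ ⊤ := by
    rintro ⟨K, S⟩ htop
    rcases Nat.eq_zero_or_pos K with hK0 | hKpos
    · subst hK0
      rw [hV] at htop
      simp only [iSup_of_empty] at htop
      exact absurd htop bot_ne_top
    · exact hC ⟨K, hKpos, fun k => if (S k).card ≤ s then S k else ∅, fun k => by
        by_cases hc : (S k).card ≤ s
        · simpa [hc]
        · simp [hc], htop⟩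
  have hcov : (Set.univ : Set (Fin N → ℝ)) ⊆ ⋃ i, (V i : Set (Fin N → ℝ)) := by
    intro y _
    obtain ⟨K, hK, h, hsp, hst⟩ := hSC 0 y
    have hy : y = ∑ k : Fin K, (D ^ (K - 1 - (k : ℕ))) *ᵥ (B *ᵥ h k) := by
      have := hst
      rwa [Steers, Matrix.mulVec_zero, sub_zero] at this
    refine Set.mem_iUnion.mpr ⟨⟨K, fun k => {i : Fin L | h k i ≠ 0}.toFinset⟩, ?_⟩
    have hcard : ∀ k : Fin K, ({i : Fin L | h k i ≠ 0}.toFinset).card ≤ s := by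
      intro k
      rw [← Set.ncard_eq_toFinset_card']
      exact hsp k
    show y ∈ V _
    rw [hV, hy]
    refine Submodule.sum_mem _ fun k _ => ?_
    refine Submodule.mem_iSup_of_mem k ?_
    simp only [if_pos (hcard k)]
    exact ⟨B *ᵥ h k, mulVec_mem_cs B _ (h k) (fun j hj => by simpa using hj), by
      simp [Matrix.mulVecLin_apply]⟩
  have h0 : volume (⋃ i, (V i : Set (Fin N → ℝ))) = 0 :=
    measure_iUnion_null fun i => Measure.addHaar_submodule _ _ (hne i)
  have huniv : volume (Set.univ : Set (Fin N → ℝ)) = 0 := measure_mono_null hcov h0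
  exact (isOpen_univ.measure_pos volume Set.univ_nonempty).ne' huniv


lemma transpose_mul_col (B : Matrix (Fin N) (Fin L) ℝ) (C : Matrix (Fin L) (Fin L) ℝ)
    (j : Fin L) : (B * C)ᵀ j = B *ᵥ (Cᵀ j) := by
  ext i
  simp [Matrix.mul_apply, Matrix.mulVec, dotProduct]

lemma repl (s : ℕ) (B : Matrix (Fin N) (Fin L) ℝ) (C : Matrix (Fin L) (Fin L) ℝ)
    (f : (Fin N → ℝ) →ₗ[ℝ] (Fin N → ℝ)) (S : Finset (Fin L)) (hcard : S.card ≤ s)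
    (X : Submodule ℝ (Fin N → ℝ))
    (h : Submodule.map f (cs (B * C) S) ⊔ X = ⊤) :
    ∃ T : Finset (Fin L), T.card ≤ s ∧ Submodule.map f (cs B T) ⊔ X = ⊤ := by
  classical
  set π := X.mkQ with hπ
  have tr : ∀ P : Submodule ℝ (Fin N → ℝ),
      (Submodule.map f P ⊔ X = ⊤ ↔ Submodule.map (π ∘ₗ f) P = ⊤) := by
    intro P
    rw [Submodule.map_comp, Submodule.map_mkQ_eq_top, sup_comm]
  have htop' : Submodule.map (π ∘ₗ f) (cs (B * C) S) = ⊤ := (tr _).mp h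
  -- the quotient is spanned by ≤ s vectors
  have hfr : Module.finrank ℝ ((Fin N → ℝ) ⧸ X) ≤ s := by
    have h1 : Module.finrank ℝ ((Fin N → ℝ) ⧸ X) =
        Module.finrank ℝ (Submodule.map (π ∘ₗ f) (cs (B * C) S)) := by
      rw [htop', finrank_top]
    rw [h1]
    calc Module.finrank ℝ (Submodule.map (π ∘ₗ f) (cs (B * C) S))
        ≤ Module.finrank ℝ (cs (B * C) S) := Submodule.finrank_map_le _ _
      _ ≤ (S.image (B * C)ᵀ).card := by
          rw [cs]
          erw [← Finset.coe_image]
          exact finrank_span_finset_le_card _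
      _ ≤ S.card := Finset.card_image_le
      _ ≤ s := hcard
  set g : (Fin L → ℝ) →ₗ[ℝ] ((Fin N → ℝ) ⧸ X) := (π ∘ₗ f) ∘ₗ B.mulVecLin with hg
  set u : Fin L → ((Fin N → ℝ) ⧸ X) := fun j => g (Pi.single j 1) with hu
  have hrange : LinearMap.range g = ⊤ := by
    rw [eq_top_iff, ← htop']
    have hle : cs (B * C) S ≤ LinearMap.range B.mulVecLin := by
      rw [cs, Submodule.span_le]
      rintro _ ⟨j, hj, rfl⟩
      exact ⟨Cᵀ j, (transpose_mul_col B C j).symm⟩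
    calc Submodule.map (π ∘ₗ f) (cs (B * C) S)
        ≤ Submodule.map (π ∘ₗ f) (LinearMap.range B.mulVecLin) :=
          Submodule.map_mono hle
      _ = LinearMap.range g := (LinearMap.range_comp _ _).symm
  have hspan_u : Submodule.span ℝ (Set.range u) = ⊤ := by
    have : Set.range u = g '' Set.range (fun j : Fin L => Pi.single j (1:ℝ)) := by
      rw [← Set.range_comp]; rfl
    have hb : Submodule.span ℝ (Set.range (fun j : Fin L => Pi.single j (1:ℝ))) = ⊤ := by
      have := (Pi.basisFun ℝ (Fin L)).span_eq
      simpa [funext (Pi.basisFun_apply ℝ (Fin L))] using this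
    rw [this, ← Submodule.map_span, hb, Submodule.map_top, hrange]
  obtain ⟨b, hbsub, hbspan, hbind⟩ := exists_linearIndependent ℝ (Set.range u)
  rw [hspan_u] at hbspan
  have hbfin : b.Finite := hbind.setFinite
  haveI := hbfin.fintype
  have hbcard : Fintype.card b ≤ s :=
    le_trans hbind.fintype_card_le_finrank hfr
  have hchoice : ∀ x : b, ∃ j : Fin L, u j = (x : (Fin N → ℝ) ⧸ X) := fun x => hbsub x.2
  choose φ hφ using hchoice
  have hinj : Function.Injective φ := by
    intro x x' hxx'
    apply Subtype.ext
    rw [← hφ x, ← hφ x', hxx']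
  refine ⟨Finset.univ.image φ, ?_, ?_⟩
  · rw [Finset.card_image_of_injective _ hinj, Finset.card_univ]
    exact hbcard
  · rw [tr]
    have himg : (π ∘ₗ f) '' ((B)ᵀ '' ↑(Finset.univ.image φ)) = u '' ↑(Finset.univ.image φ) := by
      erw [Set.image_image]
      apply Set.image_congr
      intro j _
      show π (f (Bᵀ j)) = u j
      rw [hu, hg]
      simp only [LinearMap.comp_apply, Matrix.mulVecLin_apply, Matrix.mulVec_single_one]
      rfl
    rw [cs, Submodule.map_span, himg, eq_top_iff, ← hbspan]
    apply Submodule.span_mono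
    intro x hx
    exact ⟨φ ⟨x, hx⟩, by simp, hφ ⟨x, hx⟩⟩

lemma sup_split {K : ℕ} (G : Fin K → Submodule ℝ (Fin N → ℝ)) (a : Fin K) :
    (⨆ k, G k) = G a ⊔ (⨆ k, ⨆ (_ : k ≠ a), G k) := by
  apply le_antisymm
  · apply iSup_le
    intro k
    by_cases hk : k = a
    · subst hk; exact le_sup_left
    · exact le_trans (le_iSup₂ (f := fun k (_ : k ≠ a) => G k) k hk) le_sup_right
  · apply sup_le (le_iSup _ a)
    exact iSup_le fun k => iSup_le fun _ => le_iSup _ k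

lemma swap_all {K : ℕ} (s : ℕ) (B : Matrix (Fin N) (Fin L) ℝ) (C : Matrix (Fin L) (Fin L) ℝ)
    (f : Fin K → ((Fin N → ℝ) →ₗ[ℝ] (Fin N → ℝ))) (S : Fin K → Finset (Fin L))
    (hcard : ∀ k, (S k).card ≤ s)
    (htop : (⨆ k, Submodule.map (f k) (cs (B * C) (S k))) = ⊤) :
    ∃ T : Fin K → Finset (Fin L), (∀ k, (T k).card ≤ s) ∧
      (⨆ k, Submodule.map (f k) (cs B (T k))) = ⊤ := by
  classical
  have key : ∀ σ : Finset (Fin K), ∃ T : Fin K → Finset (Fin L),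
      (∀ k ∈ σ, (T k).card ≤ s) ∧
      (⨆ k, Submodule.map (f k) (if k ∈ σ then cs B (T k) else cs (B * C) (S k))) = ⊤ := by
    intro σ
    induction σ using Finset.induction_on with
    | empty => exact ⟨fun _ => ∅, by simp, by simpa using htop⟩
    | @insert a σ ha IH =>
      obtain ⟨T, hTcard, hTtop⟩ := IH
      set G : Fin K → Submodule ℝ (Fin N → ℝ) := fun k =>
        Submodule.map (f k) (if k ∈ σ then cs B (T k) else cs (B * C) (S k)) with hG
      set X : Submodule ℝ (Fin N → ℝ) := ⨆ k, ⨆ (_ : k ≠ a), G k with hX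
      have hsplit : Submodule.map (f a) (cs (B * C) (S a)) ⊔ X = ⊤ := by
        have hTtop' : iSup G = ⊤ := hTtop
        have hs := sup_split G a
        have hGa0 : G a = Submodule.map (f a) (cs (B * C) (S a)) := by
          simp only [hG, if_neg ha]
        rw [← hGa0, ← hs, hTtop']
      obtain ⟨Ta, hTa, hTatop⟩ := repl s B C (f a) (S a) (hcard a) X hsplit
      refine ⟨Function.update T a Ta, ?_, ?_⟩
      · intro k hk
        rcases Finset.mem_insert.mp hk with rfl | hk'
        · rwa [Function.update_self]
        · by_cases hka : k = a
          · subst hka; rwa [Function.update_self]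
          · rw [Function.update_of_ne hka]; exact hTcard k hk'
      · set G' : Fin K → Submodule ℝ (Fin N → ℝ) := fun k =>
          Submodule.map (f k) (if k ∈ insert a σ then cs B (Function.update T a Ta k)
            else cs (B * C) (S k)) with hG'
        have hGa : G' a = Submodule.map (f a) (cs B Ta) := by
          rw [hG']
          simp [Function.update_self]
        have hGk : ∀ k, k ≠ a → G' k = G k := by
          intro k hk
          show Submodule.map (f k) (if k ∈ insert a σ then cs B (Function.update T a Ta k)
              else cs (B * C) (S k)) = Submodule.map (f k)
              (if k ∈ σ then cs B (T k) else cs (B * C) (S k))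
          rw [Function.update_of_ne hk]
          congr 1
          exact if_congr (by simp [Finset.mem_insert, hk]) rfl rfl
        have hX' : (⨆ k, ⨆ (_ : k ≠ a), G' k) = X := by
          rw [hX]
          exact iSup_congr fun k => iSup_congr fun hk => hGk k hk
        rw [show (⨆ k, Submodule.map (f k) (if k ∈ insert a σ then
            cs B (Function.update T a Ta k) else cs (B * C) (S k))) = ⨆ k, G' k from rfl,
          sup_split G' a, hGa, hX', hTatop]
  obtain ⟨T, hTcard, hTtop⟩ := key Finset.univ
  exact ⟨T, fun k => hTcard k (Finset.mem_univ k), by simpa using hTtop⟩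

lemma cond_of_cond_mul {s : ℕ} {D : Matrix (Fin N) (Fin N) ℝ} {B : Matrix (Fin N) (Fin L) ℝ}
    {C : Matrix (Fin L) (Fin L) ℝ} (h : Cond N L s D (B * C)) : Cond N L s D B := by
  obtain ⟨K, hK, S, hc, ht⟩ := h
  obtain ⟨T, hT, ht'⟩ := swap_all s B C (fun k : Fin K => (D ^ (K - 1 - (k : ℕ))).mulVecLin)
    S hc ht
  exact ⟨K, hK, T, hT, ht'⟩

end SparseAux

open SparseAux in
/-- Controllability using inputs that are `s`-sparse under an invertible basis `Ψ`
is equivalent to controllability using inputs `s`-sparse under the canonical basis. -/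
theorem sparse_controllable_basis_invariance (N L s : ℕ) (hN : 0 < N) (hL : 0 < L)
    (hs : 0 < s) (hsL : s ≤ L)
    (D : Matrix (Fin N) (Fin N) ℝ) (H : Matrix (Fin N) (Fin L) ℝ)
    (Ψ : Matrix (Fin L) (Fin L) ℝ) (hΨ : IsUnit Ψ) :
    SparseControllable N L s D (H * Ψ) ↔ SparseControllable N L s D H := by
  constructor
  · intro h
    exact cond_to_sc (cond_of_cond_mul (sc_to_cond hN h))
  · intro h
    have hd : IsUnit Ψ.det := (Matrix.isUnit_iff_isUnit_det Ψ).mp hΨ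
    have hB : H * Ψ * Ψ⁻¹ = H := Matrix.mul_nonsing_inv_cancel_right (A := Ψ) H hd
    have hC : Cond N L s D ((H * Ψ) * Ψ⁻¹) := by
      rw [hB]
      exact sc_to_cond hN h
    exact cond_to_sc (cond_of_cond_mul hC)
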